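/- Let G be a connected finite simple graph and H an induced subgraph of G with rank A(H) ≥ rank A(G) − 1. Let v be a vertex of G not in H and h a vertex of H such that v and h are not adjacent in G and N_H(v) = N_H(h) (v and h have the same neighbors among the vertices of H). Then N_G(v) = N_G(h). -/

import Mathlib

open Matrix in
lemma B_apply {V : Type} [Fintype V] [DecidableEq V] (A : Matrix V V ℝ) (v h : V) (i j : V) :
    (((1 - Matrix.single v h (1:ℝ)) * A * (1 - Matrix.single h v 1)) : Matrix V V ℝ) i j =
      A i j - (if j = v then A i h else 0) -
        (if i = v then A h j - (if j = v then A h h else 0) else 0) := by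
  have e1 : ∀ (X : Matrix V V ℝ) (a b : V),
      (X * (1 - Matrix.single h v (1:ℝ))) a b = X a b - (if b = v then X a h else 0) := by
    intro X a b
    rw [Matrix.mul_sub, Matrix.mul_one, Matrix.sub_apply]
    by_cases hb : b = v
    · subst hb; simp
    · simp [hb]
  have e2 : ∀ (X : Matrix V V ℝ) (a b : V),
      ((1 - Matrix.single v h (1:ℝ)) * X) a b = X a b - (if a = v then X h b else 0) := by
    intro X a b
    rw [Matrix.sub_mul, Matrix.one_mul, Matrix.sub_apply]
    by_cases ha : a = v
    · subst ha; simp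
    · simp [ha]
  rw [Matrix.mul_assoc, e2, e1]
  by_cases hi : i = v <;> simp [hi, e1]

open Matrix in
lemma aux_rank {n : Type} [Fintype n] (M : Matrix (Sum n Bool) (Sum n Bool) ℝ)
    (N : Matrix n n ℝ) (c : ℝ) (hc : c ≠ 0)
    (h1 : ∀ u u', M (Sum.inl u) (Sum.inl u') = N u u')
    (h2 : ∀ u, M (Sum.inr false) (Sum.inl u) = 0)
    (h3 : ∀ u, M (Sum.inl u) (Sum.inr false) = 0)
    (h4 : M (Sum.inr false) (Sum.inr false) = 0)
    (h5 : M (Sum.inr false) (Sum.inr true) = c)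
    (h6 : M (Sum.inr true) (Sum.inr false) = c) :
    N.rank + 2 ≤ M.rank := by
  classical
  set W : Submodule ℝ (Sum n Bool → ℝ) := LinearMap.range M.mulVecLin with hW
  set p : ((Sum n Bool) → ℝ) →ₗ[ℝ] (n → ℝ) := LinearMap.funLeft ℝ ℝ Sum.inl with hp
  set q : W →ₗ[ℝ] (n → ℝ) := p ∘ₗ W.subtype with hq
  -- key computation
  have hkey : ∀ x : n → ℝ, p (M.mulVec (Sum.elim x 0)) = N.mulVec x := by
    intro x
    funext u
    simp [hp, LinearMap.funLeft_apply, Matrix.mulVec, dotProduct,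
      Fintype.sum_sum_type, h1]
  have hkey2 : ∀ x : n → ℝ, (M.mulVec (Sum.elim x 0)) (Sum.inr false) = 0 := by
    intro x
    simp [Matrix.mulVec, dotProduct, Fintype.sum_sum_type, h2]
  have hmemW : ∀ x : n → ℝ, M.mulVec (Sum.elim x 0) ∈ W :=
    fun x => ⟨Sum.elim x 0, by simp [Matrix.mulVecLin_apply]⟩
  -- the vector e
  set e : Sum n Bool → ℝ := Pi.single (Sum.inr true) 1 with he
  have heW : e ∈ W := by
    refine ⟨Pi.single (Sum.inr false) c⁻¹, ?_⟩
    rw [Matrix.mulVecLin_apply, Matrix.mulVec_single]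
    funext i
    rcases i with u | b
    · simp [he, h3, Pi.single_eq_of_ne]
    · cases b
      · simp [he, h4, Pi.single_eq_of_ne]
      · simp [he, h6, mul_inv_cancel₀ hc]
  have hpe : p e = 0 := by
    funext u
    simp [hp, he, LinearMap.funLeft_apply, Pi.single_eq_of_ne]
  have heker : (⟨e, heW⟩ : W) ∈ LinearMap.ker q := by
    simp [hq, LinearMap.mem_ker, hpe]
  -- the vector y (column at `inr true`)
  set y : Sum n Bool → ℝ := fun i => M i (Sum.inr true) with hy
  have hyW : y ∈ W := by
    refine ⟨Pi.single (Sum.inr true) 1, ?_⟩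
    rw [Matrix.mulVecLin_apply, Matrix.mulVec_single]
    funext i; simp [hy]
  have hsub : LinearMap.range N.mulVecLin ≤ LinearMap.range q := by
    rintro _ ⟨x, rfl⟩
    exact ⟨⟨M.mulVec (Sum.elim x 0), hmemW x⟩, by
      simp only [hq, LinearMap.comp_apply, Submodule.subtype_apply]
      rw [hkey, Matrix.mulVecLin_apply]⟩
  have hrn := LinearMap.finrank_range_add_finrank_ker q
  have hWrank : Module.finrank ℝ W = M.rank := rfl
  have hNrank : Module.finrank ℝ (LinearMap.range N.mulVecLin) = N.rank := rfl
  rw [hWrank] at hrn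
  by_cases hcase : p y ∈ LinearMap.range N.mulVecLin
  · -- case: the projected column is in the column space of N
    obtain ⟨x, hx⟩ := hcase
    set z : Sum n Bool → ℝ := y - M.mulVec (Sum.elim x 0) with hz
    have hzW : z ∈ W := W.sub_mem hyW (hmemW x)
    have hpz : p z = 0 := by
      rw [hz, map_sub, hkey, ← Matrix.mulVecLin_apply, hx, sub_self]
    have hzf : z (Sum.inr false) = c := by
      simp [hz, hy, hkey2, h5]
    have hzker : (⟨z, hzW⟩ : W) ∈ LinearMap.ker q := by
      simp [hq, LinearMap.mem_ker, hpz]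
    -- linear independence of z and e
    have li : LinearIndependent ℝ ![z, e] := by
      rw [LinearIndependent.pair_iff]
      intro s t hst
      have h1' : s * c = 0 := by
        have := congrFun hst (Sum.inr false)
        simpa [hzf, he, Pi.single_eq_of_ne] using this
      have hs : s = 0 := by
        rcases mul_eq_zero.1 h1' with h | h
        · exact h
        · exact absurd h hc
      subst hs
      have h2' := congrFun hst (Sum.inr true)
      simp [he] at h2'
      exact ⟨rfl, h2'⟩
    have li' : LinearIndependent ℝ ![(⟨z, hzW⟩ : W), ⟨e, heW⟩] := by
      apply LinearIndependent.of_comp W.subtype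
      have : W.subtype ∘ ![(⟨z, hzW⟩ : W), ⟨e, heW⟩] = ![z, e] := by
        funext i; fin_cases i <;> rfl
      rw [this]; exact li
    have hspan : Submodule.span ℝ (Set.range ![(⟨z, hzW⟩ : W), ⟨e, heW⟩]) ≤ LinearMap.ker q := by
      rw [Submodule.span_le]
      rintro _ ⟨i, rfl⟩
      fin_cases i
      · exact hzker
      · exact heker
    have hker2 : 2 ≤ Module.finrank ℝ (LinearMap.ker q) := by
      have := finrank_span_eq_card li'
      have hmono := Submodule.finrank_mono hspan
      rw [this] at hmono
      simpa using hmono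
    have hrange : N.rank ≤ Module.finrank ℝ (LinearMap.range q) := by
      rw [← hNrank]; exact Submodule.finrank_mono hsub
    omega
  · -- case: the projected column is NOT in the column space of N
    have hylt : LinearMap.range N.mulVecLin <
        LinearMap.range N.mulVecLin ⊔ Submodule.span ℝ {p y} := by
      refine lt_of_le_of_ne le_sup_left fun hEq => hcase ?_
      rw [hEq]
      exact Submodule.mem_sup_right (Submodule.mem_span_singleton_self _)
    have hyle : LinearMap.range N.mulVecLin ⊔ Submodule.span ℝ {p y} ≤ LinearMap.range q := by
      refine sup_le hsub ?_
      rw [Submodule.span_le, Set.singleton_subset_iff]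
      exact ⟨⟨y, hyW⟩, rfl⟩
    have hrange : N.rank + 1 ≤ Module.finrank ℝ (LinearMap.range q) := by
      have hlt := Submodule.finrank_lt_finrank_of_lt hylt
      have hle := Submodule.finrank_mono hyle
      rw [hNrank] at hlt
      omega
    have hker1 : 1 ≤ Module.finrank ℝ (LinearMap.ker q) := by
      rw [Nat.one_le_iff_ne_zero, ← Nat.pos_iff_ne_zero]; refine (Module.finrank_pos_iff_exists_ne_zero (R := ℝ) (M := LinearMap.ker q)).mpr ?_
      refine ⟨⟨⟨e, heW⟩, heker⟩, ?_⟩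
      intro h0
      have : e = 0 := by
        have := congrArg (Subtype.val ∘ Subtype.val) h0
        simpa using this
      have := congrFun this (Sum.inr true)
      simp [he] at this
    omega



open Classical in
/-- The adjacency matrix of a finite simple graph over `ℝ`. -/
noncomputable def adjMat {V : Type} [Fintype V] (G : SimpleGraph V) : Matrix V V ℝ :=
  Matrix.of fun i j => if G.Adj i j then (1 : ℝ) else 0

/-- If `H = G[S]` is an induced subgraph of a connected graph `G` with
`rank A(H) ≥ rank A(G) - 1`, and `v ∉ S`, `h ∈ S` are non-adjacent vertices with the
same neighbours among the vertices of `H`, then `N_G(v) = N_G(h)`. -/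
theorem stmt4 {V : Type} [Fintype V] (G : SimpleGraph V) (hG : G.Connected)
    (S : Set V) [Fintype S]
    (hrank : (adjMat G).rank ≤ (adjMat (G.induce S)).rank + 1)
    (v h : V) (hv : v ∉ S) (hh : h ∈ S) (hvh : ¬ G.Adj v h)
    (hN : ∀ u ∈ S, G.Adj v u ↔ G.Adj h u) :
    G.neighborSet v = G.neighborSet h := by
  classical
  refine Set.ext fun w => ?_
  simp only [SimpleGraph.mem_neighborSet]
  by_contra hw
  -- basic facts about w
  have hwS : w ∉ S := fun hwS => hw (hN w hwS)
  set A := adjMat G with hA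
  have hAdef : ∀ i j, A i j = if G.Adj i j then (1:ℝ) else 0 := fun i j => rfl
  have hAsymm : ∀ i j, A i j = A j i := by
    intro i j; rw [hAdef, hAdef]
    exact if_congr (G.adj_comm i j) rfl rfl
  have hAvh : A v h = 0 := if_neg hvh
  have hAhv : A h v = 0 := by rw [← hAsymm]; exact hAvh
  have hAvv : A v v = 0 := if_neg (G.irrefl)
  have hAhh : A h h = 0 := if_neg (G.irrefl)
  have hArow : ∀ u : S, A v ↑u = A h ↑u := by
    intro u; rw [hAdef, hAdef]
    exact if_congr (hN u u.2) rfl rfl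
  set c : ℝ := A v w - A h w with hc'
  have hc : c ≠ 0 := by
    rw [hc', hAdef, hAdef]
    by_cases h1 : G.Adj v w <;> by_cases h2 : G.Adj h w <;>
      simp [h1, h2] at hw ⊢ <;> tauto
  -- the embedding of S ⊕ Bool into V
  set f : (↥S) ⊕ Bool → V := Sum.elim (fun s => (s : V)) (fun b => cond b w v) with hf
  have hwv : w ≠ v := by
    intro hwv; subst hwv
    rw [hAvv, ← hAsymm, hAvh] at hc'
    exact hc (by rw [hc']; ring)
  -- the transformed matrix
  set B : Matrix V V ℝ :=
    (1 - Matrix.single v h (1:ℝ)) * A * (1 - Matrix.single h v 1) with hB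
  set M : Matrix ((↥S) ⊕ Bool) ((↥S) ⊕ Bool) ℝ := B.submatrix f f with hM
  have hvS : ∀ u : S, (u : V) ≠ v := fun u he => hv (he ▸ u.2)
  -- apply the rank lemma
  have key := aux_rank M (adjMat (G.induce S)) c hc
    (by
      intro u u'
      show B (↑u) (↑u') = _
      rw [hB, B_apply, if_neg (hvS u'), if_neg (hvS u)]
      simp only [sub_zero]
      show _ = if (G.induce S).Adj u u' then (1:ℝ) else 0
      rw [hAdef]
      exact if_congr (by simp [SimpleGraph.comap_adj]) rfl rfl)
    (by
      intro u
      show B v (↑u) = 0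
      rw [hB, B_apply, if_neg (hvS u), if_pos rfl, if_neg (hvS u), hArow u]
      ring)
    (by
      intro u
      show B (↑u) v = 0
      rw [hB, B_apply, if_pos rfl, if_neg (hvS u)]
      rw [hAsymm (↑u) v, hAsymm (↑u) h, hArow u]
      ring)
    (by
      show B v v = 0
      rw [hB, B_apply, if_pos rfl, if_pos rfl, hAvv, hAvh, hAhv, hAhh]
      simp)
    (by
      show B v w = c
      rw [hB, B_apply, if_neg hwv, if_pos rfl, if_neg hwv, hc']
      ring)
    (by
      show B w v = c
      rw [hB, B_apply, if_pos rfl, if_neg hwv]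
      rw [hAsymm w v, hAsymm w h, hc']
      ring)
  -- rank M ≤ rank B ≤ rank A
  have hMfact : M = ((1 : Matrix V V ℝ).submatrix f (Equiv.refl V)) * B *
      ((1 : Matrix V V ℝ).submatrix (Equiv.refl V) f) := by
    rw [Matrix.mul_submatrix_one, Matrix.one_submatrix_mul]
    simp [hM, Matrix.submatrix_submatrix]
  have hMB : M.rank ≤ B.rank := by
    rw [hMfact]
    calc (((1 : Matrix V V ℝ).submatrix f (Equiv.refl V)) * B *
        ((1 : Matrix V V ℝ).submatrix (Equiv.refl V) f)).rank
        ≤ (((1 : Matrix V V ℝ).submatrix f (Equiv.refl V)) * B).rank :=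
          Matrix.rank_mul_le_left _ _
      _ ≤ B.rank := Matrix.rank_mul_le_right _ _
  have hBA : B.rank ≤ A.rank := by
    rw [hB]
    calc ((1 - Matrix.single v h (1:ℝ)) * A *
        (1 - Matrix.single h v 1)).rank
        ≤ ((1 - Matrix.single v h (1:ℝ)) * A).rank := Matrix.rank_mul_le_left _ _
      _ ≤ A.rank := Matrix.rank_mul_le_right _ _
  omega
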